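/- For vectors in ℝ³ (or functions valued in ℝ³), the map f(u) = |u|^{r-1} u with r ≥ 1 satisfies the monotonicity lower bound: there exists a constant C(r) > 0 such that (f(a) - f(b)) · (a - b) ≥ C(r) |a - b|^{r+1} for all a, b ∈ ℝ³. -/
import Mathlib


open scoped RealInnerProductSpace

/-- Monotonicity lower bound for the damping nonlinearity `f(u) = |u|^{r-1} u` on `ℝ³`. -/
theorem damping_monotonicity (r : ℝ) (hr : 1 ≤ r) :
    ∃ C : ℝ, 0 < C ∧
      ∀ a b : EuclideanSpace ℝ (Fin 3),
        C * ‖a - b‖ ^ (r + 1) ≤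
          ⟪(‖a‖ ^ (r - 1)) • a - (‖b‖ ^ (r - 1)) • b, a - b⟫ := by
  refine ⟨(2:ℝ)^(-r), Real.rpow_pos_of_pos two_pos _, fun a b => ?_⟩
  set A := ‖a‖ with hA
  set B := ‖b‖ with hB
  set D := ‖a - b‖ with hD
  have hA0 : 0 ≤ A := norm_nonneg _
  have hB0 : 0 ≤ B := norm_nonneg _
  have hD0 : 0 ≤ D := norm_nonneg _
  have hs : (0:ℝ) ≤ r - 1 := by linarith
  have hinner : ⟪(A ^ (r - 1)) • a - (B ^ (r - 1)) • b, a - b⟫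
      = A ^ (r-1) * A^2 + B ^ (r-1) * B^2 - (A ^ (r-1) + B ^ (r-1)) * ⟪a, b⟫ := by
    simp only [inner_sub_left, inner_sub_right, real_inner_smul_left,
      real_inner_self_eq_norm_sq, real_inner_comm b a]
    ring
  have hD2 : D^2 = A^2 - 2*⟪a,b⟫ + B^2 := by
    rw [hD, hA, hB, norm_sub_sq_real]
  have hmono : 0 ≤ (A ^ (r-1) - B ^ (r-1)) * (A^2 - B^2) := by
    rcases le_total A B with h | h
    · have h1 : A ^ (r-1) ≤ B ^ (r-1) := Real.rpow_le_rpow hA0 h hs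
      have h2 : A^2 ≤ B^2 := by nlinarith
      nlinarith
    · have h1 : B ^ (r-1) ≤ A ^ (r-1) := Real.rpow_le_rpow hB0 h hs
      have h2 : B^2 ≤ A^2 := by nlinarith
      nlinarith
  have hkey : (1/2) * (A ^ (r-1) + B ^ (r-1)) * D^2
      ≤ ⟪(A ^ (r - 1)) • a - (B ^ (r - 1)) • b, a - b⟫ := by
    rw [hinner, hD2]; nlinarith
  have hApow : 0 ≤ A ^ (r-1) := Real.rpow_nonneg hA0 _
  have hBpow : 0 ≤ B ^ (r-1) := Real.rpow_nonneg hB0 _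
  have hDs : D ^ (r-1) ≤ 2 ^ (r-1) * (A ^ (r-1) + B ^ (r-1)) := by
    have h1 : D ≤ A + B := norm_sub_le a b
    have h2 : D ^ (r-1) ≤ (A+B) ^ (r-1) := Real.rpow_le_rpow hD0 h1 hs
    have h3 : (A+B) ^ (r-1) ≤ (2 * max A B) ^ (r-1) := by
      apply Real.rpow_le_rpow (by positivity) _ hs
      rcases le_total A B with h | h
      · rw [max_eq_right h]; linarith
      · rw [max_eq_left h]; linarith
    have h4 : (2 * max A B) ^ (r-1) = 2 ^ (r-1) * (max A B) ^ (r-1) :=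
      Real.mul_rpow (by norm_num) (le_max_iff.2 (Or.inl hA0))
    have h5 : (max A B) ^ (r-1) ≤ A ^ (r-1) + B ^ (r-1) := by
      rcases le_total A B with h | h
      · rw [max_eq_right h]; linarith
      · rw [max_eq_left h]; linarith
    have h2pow : (0:ℝ) ≤ (2:ℝ) ^ (r-1) := (Real.rpow_pos_of_pos two_pos _).le
    calc D ^ (r-1) ≤ (2 * max A B) ^ (r-1) := h2.trans h3
      _ = 2 ^ (r-1) * (max A B) ^ (r-1) := h4
      _ ≤ 2 ^ (r-1) * (A ^ (r-1) + B ^ (r-1)) := by nlinarith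
  rcases eq_or_lt_of_le hD0 with hDz | hDpos
  · have hz : D ^ (r+1) = 0 := by
      rw [← hDz]; exact Real.zero_rpow (by linarith)
    rw [hz, mul_zero]
    calc (0:ℝ) ≤ (1/2) * (A ^ (r-1) + B ^ (r-1)) * D^2 := by positivity
      _ ≤ _ := hkey
  · have hsplit : D ^ (r+1) = D ^ (r-1) * D^2 := by
      rw [← Real.rpow_natCast D 2, ← Real.rpow_add hDpos]
      congr 1
      push_cast
      ring
    have hC2 : (2:ℝ)^(-r) * (2:ℝ)^(r-1) = 1/2 := by
      rw [← Real.rpow_add two_pos, show -r + (r-1) = -1 by ring, Real.rpow_neg_one]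
      norm_num
    have hCpos : (0:ℝ) < (2:ℝ)^(-r) := Real.rpow_pos_of_pos two_pos _
    have hD2nn : (0:ℝ) ≤ D^2 := sq_nonneg D
    calc (2:ℝ)^(-r) * D ^ (r+1) = (2:ℝ)^(-r) * (D ^ (r-1) * D^2) := by rw [hsplit]
      _ ≤ (2:ℝ)^(-r) * (2 ^ (r-1) * (A ^ (r-1) + B ^ (r-1)) * D^2) := by
          apply mul_le_mul_of_nonneg_left _ hCpos.le
          exact mul_le_mul_of_nonneg_right hDs hD2nn
      _ = (1/2) * (A ^ (r-1) + B ^ (r-1)) * D^2 := by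
          rw [show (2:ℝ)^(-r) * (2 ^ (r-1) * (A ^ (r-1) + B ^ (r-1)) * D^2)
            = ((2:ℝ)^(-r) * 2 ^ (r-1)) * (A ^ (r-1) + B ^ (r-1)) * D^2 by ring, hC2]
      _ ≤ _ := hkey
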